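/- arXiv:1206.2442 — 4 statements merged into one kernel-verified Lean document; each statement's English description precedes it below -/
import Mathlib

section
/- Let h > 0, λ > 0, x_i ∈ ℝ, x_{i+1} = x_i + h, and let y_i, y_{i+1}, M_i, M_{i+1} ∈ ℝ. Define S : ℝ → ℝ by S(x) = (h²/(λ² sinh λ))·[M_{i+1}·sinh(λ(x−x_i)/h) + M_i·sinh(λ(x_{i+1}−x)/h)] − (h²/λ²)·[((x−x_i)/h)·(M_{i+1} − (λ²/h²)·y_{i+1}) + ((x_{i+1}−x)/h)·(M_i − (λ²/h²)·y_i)]. Then the derivative of S at the left endpoint satisfies S'(x_i) = (y_{i+1} − y_i)/h − (h/λ²)·[(1 − λ/sinh λ)·M_{i+1} + (λ·coth λ − 1)·M_i]. -/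
open Real

theorem tension_spline_deriv_left_endpoint
    (h lam xi xi1 : ℝ) (hh : 0 < h) (hlam : 0 < lam) (hx : xi1 = xi + h)
    (y0 y1 M0 M1 : ℝ)
    (S : ℝ → ℝ)
    (hS : ∀ x, S x =
      (h ^ 2 / (lam ^ 2 * Real.sinh lam)) *
        (M1 * Real.sinh (lam * (x - xi) / h) + M0 * Real.sinh (lam * (xi1 - x) / h)) -
      (h ^ 2 / lam ^ 2) *
        (((x - xi) / h) * (M1 - (lam ^ 2 / h ^ 2) * y1) +
         ((xi1 - x) / h) * (M0 - (lam ^ 2 / h ^ 2) * y0))) :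
    deriv S xi = (y1 - y0) / h -
      (h / lam ^ 2) * ((1 - lam / Real.sinh lam) * M1 +
        (lam * (Real.cosh lam / Real.sinh lam) - 1) * M0) := by
  have hfun : S = fun x =>
      (h ^ 2 / (lam ^ 2 * Real.sinh lam)) *
        (M1 * Real.sinh (lam * (x - xi) / h) + M0 * Real.sinh (lam * (xi1 - x) / h)) -
      (h ^ 2 / lam ^ 2) *
        (((x - xi) / h) * (M1 - (lam ^ 2 / h ^ 2) * y1) +
         ((xi1 - x) / h) * (M0 - (lam ^ 2 / h ^ 2) * y0)) := funext hS
  have hh0 : h ≠ 0 := ne_of_gt hh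
  have hl0 : lam ≠ 0 := ne_of_gt hlam
  have hs0 : Real.sinh lam ≠ 0 := by
    exact Real.sinh_ne_zero.mpr hl0
  have h1 : HasDerivAt (fun x : ℝ => lam * (x - xi) / h) (lam / h) xi := by
    have : HasDerivAt (fun x : ℝ => lam * (x - xi) / h) (lam * 1 / h) xi :=
      (((hasDerivAt_id xi).sub_const xi).const_mul lam).div_const h
    simpa [neg_div] using this
  have h2 : HasDerivAt (fun x : ℝ => lam * (xi1 - x) / h) (-(lam / h)) xi := by
    have : HasDerivAt (fun x : ℝ => lam * (xi1 - x) / h) (lam * (0 - 1) / h) xi :=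
      (((hasDerivAt_const xi xi1).sub (hasDerivAt_id xi)).const_mul lam).div_const h
    simpa [neg_div] using this
  have hs1 : HasDerivAt (fun x : ℝ => Real.sinh (lam * (x - xi) / h))
      (Real.cosh (lam * (xi - xi) / h) * (lam / h)) xi :=
    (Real.hasDerivAt_sinh _).comp xi h1
  have hs2 : HasDerivAt (fun x : ℝ => Real.sinh (lam * (xi1 - x) / h))
      (Real.cosh (lam * (xi1 - xi) / h) * (-(lam / h))) xi :=
    (Real.hasDerivAt_sinh _).comp xi h2
  have hL1 : HasDerivAt (fun x : ℝ => (x - xi) / h) (1 / h) xi := by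
    have := ((hasDerivAt_id xi).sub_const xi).div_const h
    simpa [neg_div] using this
  have hL2 : HasDerivAt (fun x : ℝ => (xi1 - x) / h) (-(1 / h)) xi := by
    have := ((hasDerivAt_const xi xi1).sub (hasDerivAt_id xi)).div_const h
    simpa [neg_div] using this
  have hD : HasDerivAt S
      ((h ^ 2 / (lam ^ 2 * Real.sinh lam)) *
        (M1 * (Real.cosh (lam * (xi - xi) / h) * (lam / h)) +
         M0 * (Real.cosh (lam * (xi1 - xi) / h) * (-(lam / h)))) -
       (h ^ 2 / lam ^ 2) *
        ((1 / h) * (M1 - (lam ^ 2 / h ^ 2) * y1) +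
         (-(1 / h)) * (M0 - (lam ^ 2 / h ^ 2) * y0))) xi := by
    rw [hfun]
    exact ((((hs1.const_mul M1).add (hs2.const_mul M0)).const_mul _).sub
      (((hL1.mul_const _).add (hL2.mul_const _)).const_mul _))
  rw [hD.deriv]
  have e1 : lam * (xi - xi) / h = 0 := by ring
  have e2 : lam * (xi1 - xi) / h = lam := by rw [hx]; field_simp; ring
  rw [e1, e2, Real.cosh_zero]
  field_simp
  ring
end

section
/- Let h > 0, λ > 0, x_i ∈ ℝ, x_{i+1} = x_i + h, and let y_i, y_{i+1}, M_i, M_{i+1} ∈ ℝ. Define S : ℝ → ℝ by S(x) = (h²/(λ² sinh λ))·[M_{i+1}·sinh(λ(x−x_i)/h) + M_i·sinh(λ(x_{i+1}−x)/h)] − (h²/λ²)·[((x−x_i)/h)·(M_{i+1} − (λ²/h²)·y_{i+1}) + ((x_{i+1}−x)/h)·(M_i − (λ²/h²)·y_i)]. Then the derivative of S at the right endpoint satisfies S'(x_{i+1}) = (y_{i+1} − y_i)/h + (h/λ²)·[(λ·coth λ − 1)·M_{i+1} + (1 − λ/sinh λ)·M_i]. -/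
open Real

theorem tension_spline_deriv_right_endpoint
    (h lam xi xi1 : ℝ) (hh : 0 < h) (hlam : 0 < lam) (hx : xi1 = xi + h)
    (y0 y1 M0 M1 : ℝ)
    (S : ℝ → ℝ)
    (hS : ∀ x, S x =
      (h ^ 2 / (lam ^ 2 * Real.sinh lam)) *
        (M1 * Real.sinh (lam * (x - xi) / h) + M0 * Real.sinh (lam * (xi1 - x) / h)) -
      (h ^ 2 / lam ^ 2) *
        (((x - xi) / h) * (M1 - (lam ^ 2 / h ^ 2) * y1) +
         ((xi1 - x) / h) * (M0 - (lam ^ 2 / h ^ 2) * y0))) :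
    deriv S xi1 = (y1 - y0) / h +
      (h / lam ^ 2) * ((lam * (Real.cosh lam / Real.sinh lam) - 1) * M1 +
        (1 - lam / Real.sinh lam) * M0) := by
  have hSfun : S = fun x =>
      (h ^ 2 / (lam ^ 2 * Real.sinh lam)) *
        (M1 * Real.sinh (lam * (x - xi) / h) + M0 * Real.sinh (lam * (xi1 - x) / h)) -
      (h ^ 2 / lam ^ 2) *
        (((x - xi) / h) * (M1 - (lam ^ 2 / h ^ 2) * y1) +
         ((xi1 - x) / h) * (M0 - (lam ^ 2 / h ^ 2) * y0)) := funext hS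
  have hne : h ≠ 0 := ne_of_gt hh
  have hlne : lam ≠ 0 := ne_of_gt hlam
  have hsinh : Real.sinh lam ≠ 0 := by
    positivity
  have h1 : HasDerivAt (fun x : ℝ => lam * (x - xi) / h) (lam / h) xi1 := by
    have := (((hasDerivAt_id xi1).sub_const xi).const_mul lam).div_const h
    simpa using this
  have h2 : HasDerivAt (fun x : ℝ => lam * (xi1 - x) / h) (-(lam / h)) xi1 := by
    have := (((hasDerivAt_id xi1).const_sub xi1).const_mul lam).div_const h
    simpa [neg_div] using this
  have h3 : HasDerivAt (fun x : ℝ => (x - xi) / h) (1 / h) xi1 := by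
    have := ((hasDerivAt_id xi1).sub_const xi).div_const h
    simpa using this
  have h4 : HasDerivAt (fun x : ℝ => (xi1 - x) / h) (-(1 / h)) xi1 := by
    have := ((hasDerivAt_id xi1).const_sub xi1).div_const h
    simpa [neg_div] using this
  have hD : HasDerivAt S
      ((h ^ 2 / (lam ^ 2 * Real.sinh lam)) *
        (M1 * (Real.cosh (lam * (xi1 - xi) / h) * (lam / h)) +
         M0 * (Real.cosh (lam * (xi1 - xi1) / h) * (-(lam / h)))) -
       (h ^ 2 / lam ^ 2) *
        ((1 / h) * (M1 - (lam ^ 2 / h ^ 2) * y1) +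
         (-(1 / h)) * (M0 - (lam ^ 2 / h ^ 2) * y0))) xi1 := by
    rw [hSfun]
    exact (((h1.sinh.const_mul M1).add (h2.sinh.const_mul M0)).const_mul
        (h ^ 2 / (lam ^ 2 * Real.sinh lam))).sub
      (((h3.mul_const (M1 - (lam ^ 2 / h ^ 2) * y1)).add
        (h4.mul_const (M0 - (lam ^ 2 / h ^ 2) * y0))).const_mul (h ^ 2 / lam ^ 2))
  rw [hD.deriv]
  have e1 : lam * (xi1 - xi) / h = lam := by
    rw [hx]; field_simp; ring
  have e2 : lam * (xi1 - xi1) / h = 0 := by simp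
  rw [e1, e2, Real.cosh_zero]
  field_simp
  ring
end

section
/- Let y : ℝ → ℝ be eight times continuously differentiable, let x ∈ ℝ, and let λ₁, λ₂ ∈ ℝ. Define T(h) = [y(x+h) − 2y(x) + y(x−h)] − h²·[λ₁·y''(x−h) + 2λ₂·y''(x) + λ₁·y''(x+h)]. Then as h → 0, T(h) = (1 − 2(λ₁ + λ₂))·h²·y''(x) + (1/12 − λ₁)·h⁴·y⁽⁴⁾(x) + (1/360 − λ₁/12)·h⁶·y⁽⁶⁾(x) + O(h⁸). -/
open Real Filter Topology Asymptotics

lemma iteratedDeriv_add_aux (m n : ℕ) (f : ℝ → ℝ) :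
    iteratedDeriv m (iteratedDeriv n f) = iteratedDeriv (m + n) f := by
  induction n generalizing f with
  | zero => simp
  | succ k ih =>
    rw [iteratedDeriv_succ', ih (deriv f), ← iteratedDeriv_succ']
    congr 1

lemma taylor_poly_hasDerivAt (f : ℝ → ℝ) (x : ℝ) (n : ℕ) (h : ℝ) :
    HasDerivAt (fun t : ℝ => ∑ k ∈ Finset.range (n + 1),
        iteratedDeriv k f x * t ^ k / (k.factorial : ℝ))
      (∑ k ∈ Finset.range n,
        iteratedDeriv k (deriv f) x * h ^ k / (k.factorial : ℝ)) h := by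
  have H : HasDerivAt (fun t : ℝ => ∑ k ∈ Finset.range (n + 1),
      iteratedDeriv k f x * t ^ k / (k.factorial : ℝ))
      (∑ k ∈ Finset.range (n + 1),
        iteratedDeriv k f x * ((k : ℝ) * h ^ (k - 1)) / (k.factorial : ℝ)) h := by
    apply HasDerivAt.fun_sum
    intro k _
    simpa [mul_div_assoc] using
      ((hasDerivAt_pow k h).const_mul (iteratedDeriv k f x)).div_const (k.factorial : ℝ)
  convert H using 1
  rw [Finset.sum_range_succ' (fun k => iteratedDeriv k f x * ((k : ℝ) * h ^ (k - 1)) / (k.factorial : ℝ)) n]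
  simp only [Nat.cast_zero, zero_mul, mul_zero, zero_div, add_zero]
  apply Finset.sum_congr rfl
  intro k _
  rw [← iteratedDeriv_succ', Nat.factorial_succ]
  have hk : ((k+1 : ℕ) : ℝ) ≠ 0 := by positivity
  have hkf : ((k.factorial : ℕ) : ℝ) ≠ 0 := by positivity
  push_cast
  field_simp

lemma taylor_remainder_isBigO (n : ℕ) (f : ℝ → ℝ) (hf : ContDiff ℝ n f) (x : ℝ) :
    (fun h : ℝ => f (x + h) - ∑ k ∈ Finset.range n,
        iteratedDeriv k f x * h ^ k / (k.factorial : ℝ))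
      =O[nhds 0] (fun h : ℝ => h ^ n) := by
  induction n generalizing f with
  | zero =>
    simp only [Finset.range_zero, Finset.sum_empty, sub_zero, pow_zero]
    have ht : Tendsto (fun h : ℝ => f (x + h)) (nhds 0) (nhds (f x)) := by
      have := (hf.continuous.tendsto x).comp (by
        simpa using (continuous_const.add continuous_id).tendsto (0 : ℝ))
      exact this
    simpa using ht.isBigO_one ℝ
  | succ n ih =>
    have hf2 : ContDiff ℝ ((n : WithTop ℕ∞) + 1) f := by exact_mod_cast hf
    have hf' : ContDiff ℝ n (deriv f) := (contDiff_succ_iff_deriv.mp hf2).2.2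
    have hdf : Differentiable ℝ f := (contDiff_succ_iff_deriv.mp hf2).1
    set F : ℝ → ℝ := fun h => f (x + h) - ∑ k ∈ Finset.range (n + 1),
        iteratedDeriv k f x * h ^ k / (k.factorial : ℝ) with hF
    set G : ℝ → ℝ := fun h => deriv f (x + h) - ∑ k ∈ Finset.range n,
        iteratedDeriv k (deriv f) x * h ^ k / (k.factorial : ℝ) with hG
    have hFD : ∀ h : ℝ, HasDerivAt F (G h) h := by
      intro h
      have h1 : HasDerivAt (fun t : ℝ => f (x + t)) (deriv f (x + h)) h := by
        have := ((hdf (x + h)).hasDerivAt).comp h ((hasDerivAt_id h).const_add x)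
        exact this.congr_deriv (mul_one _)
      exact h1.sub (taylor_poly_hasDerivAt f x n h)
    have hF0 : F 0 = 0 := by
      simp only [hF]
      rw [Finset.sum_eq_single 0]
      · simp [iteratedDeriv_zero]
      · intro k _ hk
        simp [zero_pow hk]
      · simp
    have hGO : G =O[nhds 0] (fun h : ℝ => h ^ n) := ih (deriv f) hf'
    rcases hGO.exists_pos with ⟨C, hCpos, hC⟩
    rw [IsBigOWith] at hC
    rcases Metric.eventually_nhds_iff.mp hC with ⟨δ, hδpos, hδ⟩
    rw [isBigO_iff]
    refine ⟨C, Metric.eventually_nhds_iff.mpr ⟨δ, hδpos, ?_⟩⟩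
    intro h hh
    simp only [dist_zero_right, Real.norm_eq_abs] at hh
    have seg : ∀ t ∈ segment ℝ (0 : ℝ) h, |t| ≤ |h| := by
      intro t ht
      rw [segment_eq_uIcc, Set.mem_uIcc] at ht
      rcases ht with ⟨h1, h2⟩ | ⟨h1, h2⟩
      · rw [abs_le]
        constructor
        · linarith [neg_abs_le h, abs_nonneg h]
        · linarith [le_abs_self h]
      · rw [abs_le]
        constructor
        · linarith [neg_abs_le h]
        · linarith [le_abs_self h, abs_nonneg h]
    have key := (convex_segment (0 : ℝ) h).norm_image_sub_le_of_norm_hasDerivWithin_le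
      (f := F) (f' := G) (C := C * |h| ^ n)
      (fun t ht => (hFD t).hasDerivWithinAt)
      (fun t ht => by
        have h1 : |t| ≤ |h| := seg t ht
        have h2 : dist t 0 < δ := by
          simp only [dist_zero_right, Real.norm_eq_abs]
          exact lt_of_le_of_lt h1 hh
        have h3 := hδ h2
        simp only [Real.norm_eq_abs, abs_pow] at h3 ⊢
        exact h3.trans (by gcongr))
      (left_mem_segment ℝ 0 h) (right_mem_segment ℝ 0 h)
    rw [hF0, sub_zero, sub_zero] at key
    simp only [Real.norm_eq_abs, abs_pow] at key ⊢
    calc |F h| ≤ C * |h| ^ n * |h| := key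
      _ = C * |h| ^ (n + 1) := by ring

theorem truncation_error_expansion
    (y : ℝ → ℝ) (hy : ContDiff ℝ 8 y) (x : ℝ) (lam1 lam2 : ℝ) :
    (fun h : ℝ =>
        ((y (x + h) - 2 * y x + y (x - h)) -
          h ^ 2 * (lam1 * iteratedDeriv 2 y (x - h) + 2 * lam2 * iteratedDeriv 2 y x +
            lam1 * iteratedDeriv 2 y (x + h))) -
        ((1 - 2 * (lam1 + lam2)) * h ^ 2 * iteratedDeriv 2 y x +
         (1 / 12 - lam1) * h ^ 4 * iteratedDeriv 4 y x +
         (1 / 360 - lam1 / 12) * h ^ 6 * iteratedDeriv 6 y x))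
      =O[nhds 0] (fun h : ℝ => h ^ 8) := by
  have hneg : Tendsto (fun h : ℝ => -h) (nhds 0) (nhds 0) := by
    simpa using (continuous_neg.tendsto (0 : ℝ))
  set g : ℝ → ℝ := iteratedDeriv 2 y with hg
  have hgy : ∀ k : ℕ, iteratedDeriv k g x = iteratedDeriv (k + 2) y x := by
    intro k; rw [hg, iteratedDeriv_add_aux]
  have hgC : ContDiff ℝ 6 g := by
    have : ContDiff ℝ ((6 + 2 : ℕ) : ℕ∞) y := by exact_mod_cast hy
    have h2 := ContDiff.iterate_deriv' 6 2 this
    rwa [hg, iteratedDeriv_eq_iterate]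
  -- the four remainder functions
  have R8p := taylor_remainder_isBigO 8 y hy x
  have R6p := taylor_remainder_isBigO 6 g hgC x
  have R8m : (fun h : ℝ => y (x + -h) - ∑ k ∈ Finset.range 8,
      iteratedDeriv k y x * (-h) ^ k / (k.factorial : ℝ)) =O[nhds 0] (fun h : ℝ => h ^ 8) := by
    have := R8p.comp_tendsto hneg
    refine this.trans (IsBigO.of_bound 1 ?_)
    filter_upwards with h
    simp [Even.neg_pow (by decide : Even 8)]
  have R6m : (fun h : ℝ => g (x + -h) - ∑ k ∈ Finset.range 6,
      iteratedDeriv k g x * (-h) ^ k / (k.factorial : ℝ)) =O[nhds 0] (fun h : ℝ => h ^ 6) := by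
    have := R6p.comp_tendsto hneg
    refine this.trans (IsBigO.of_bound 1 ?_)
    filter_upwards with h
    simp [Even.neg_pow (by decide : Even 6)]
  -- multiplied by h^2, order-6 remainders become order 8
  have hpow : (fun h : ℝ => h ^ 2 * h ^ 6) = (fun h : ℝ => h ^ 8) := by
    funext h; ring
  have R6p' : (fun h : ℝ => h ^ 2 * (g (x + h) - ∑ k ∈ Finset.range 6,
      iteratedDeriv k g x * h ^ k / (k.factorial : ℝ))) =O[nhds 0] (fun h : ℝ => h ^ 8) := by
    have := (isBigO_refl (fun h : ℝ => h ^ 2) (nhds 0)).mul R6p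
    rwa [hpow] at this
  have R6m' : (fun h : ℝ => h ^ 2 * (g (x + -h) - ∑ k ∈ Finset.range 6,
      iteratedDeriv k g x * (-h) ^ k / (k.factorial : ℝ))) =O[nhds 0] (fun h : ℝ => h ^ 8) := by
    have := (isBigO_refl (fun h : ℝ => h ^ 2) (nhds 0)).mul R6m
    rwa [hpow] at this
  have comb := ((R8p.add R8m).sub (R6m'.const_mul_left lam1)).sub (R6p'.const_mul_left lam1)
  refine comb.congr_left ?_
  intro h
  have e1 : x - h = x + -h := by ring
  rw [e1]
  simp only [Finset.sum_range_succ, Finset.sum_range_zero, hgy, iteratedDeriv_zero, hg, iteratedDeriv_add_aux]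
  norm_num [Nat.factorial]
  ring
end

section
/- Let y : ℝ → ℝ be six times continuously differentiable and let x ∈ ℝ. With λ₁ = 1/12 and λ₂ = 5/12, as h → 0 one has [y(x+h) − 2y(x) + y(x−h)] − h²·[(1/12)·y''(x−h) + (5/6)·y''(x) + (1/12)·y''(x+h)] = O(h⁶), i.e. this choice of parameters yields a fourth-order method. -/
open Real Filter Topology Asymptotics

lemma iteratedDeriv_add' {n : ℕ} {f g : ℝ → ℝ} (hf : ContDiff ℝ n f) (hg : ContDiff ℝ n g)
    (a : ℝ) : iteratedDeriv n (fun z => f z + g z) a = iteratedDeriv n f a + iteratedDeriv n g a := by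
  rw [← iteratedDerivWithin_univ, ← iteratedDerivWithin_univ, ← iteratedDerivWithin_univ]
  exact iteratedDerivWithin_add (Set.mem_univ a) uniqueDiffOn_univ hf.contDiffWithinAt hg.contDiffWithinAt

lemma iteratedDeriv_sub' {n : ℕ} {f g : ℝ → ℝ} (hf : ContDiff ℝ n f) (hg : ContDiff ℝ n g)
    (a : ℝ) : iteratedDeriv n (fun z => f z - g z) a = iteratedDeriv n f a - iteratedDeriv n g a := by
  rw [← iteratedDerivWithin_univ, ← iteratedDerivWithin_univ, ← iteratedDerivWithin_univ]
  exact iteratedDerivWithin_sub (Set.mem_univ a) uniqueDiffOn_univ hf.contDiffWithinAt hg.contDiffWithinAt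

lemma iteratedDeriv_const_mul' {n : ℕ} {f : ℝ → ℝ} (c : ℝ) (hf : ContDiff ℝ n f)
    (a : ℝ) : iteratedDeriv n (fun z => c * f z) a = c * iteratedDeriv n f a := by
  rw [← iteratedDerivWithin_univ, ← iteratedDerivWithin_univ]
  exact iteratedDerivWithin_const_mul (Set.mem_univ a) uniqueDiffOn_univ c hf.contDiffWithinAt

lemma key_isBigO {n : ℕ} {f : ℝ → ℝ} (hf : ContDiff ℝ n f)
    (h0 : ∀ k < n, iteratedDeriv k f 0 = 0) :
    f =O[𝓝 (0:ℝ)] fun h : ℝ => h ^ n := by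
  induction n generalizing f with
  | zero =>
    simpa using hf.continuous.continuousAt.isBigO_one ℝ
  | succ n ih =>
    have hf' : ContDiff ℝ ((n : WithTop ℕ∞) + 1) f := by exact_mod_cast hf
    have hsucc := contDiff_succ_iff_deriv.mp hf'
    have hdf : Differentiable ℝ f := hsucc.1
    have hd : ContDiff ℝ n (deriv f) := hsucc.2.2
    have h0' : ∀ k < n, iteratedDeriv k (deriv f) 0 = 0 := by
      intro k hk
      rw [← iteratedDeriv_succ']
      exact h0 (k + 1) (Nat.succ_lt_succ hk)
    obtain ⟨C, hC⟩ := (ih hd h0').bound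
    rw [Metric.eventually_nhds_iff] at hC
    obtain ⟨δ, hδ, hCδ⟩ := hC
    rw [Asymptotics.isBigO_iff]
    refine ⟨|C|, ?_⟩
    rw [Metric.eventually_nhds_iff]
    refine ⟨δ, hδ, fun h hh => ?_⟩
    have hf0 : f 0 = 0 := by simpa using h0 0 (Nat.succ_pos n)
    have hb : ∀ t ∈ Set.uIcc (0:ℝ) h, ‖deriv f t‖ ≤ |C| * |h| ^ n := by
      intro t ht
      have htabs : |t| ≤ |h| := by
        rw [Set.uIcc_eq_union] at ht
        rcases ht with ht | ht <;> rw [Set.mem_Icc] at ht <;>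
          [skip; rw [abs_of_nonpos (ht.2), abs_of_nonpos (le_trans ht.1 ht.2)]] <;>
          first
            | (rw [abs_of_nonneg ht.1, abs_of_nonneg (le_trans ht.1 ht.2)] ; exact ht.2)
            | exact neg_le_neg ht.1
      have hdist : dist t 0 < δ := by
        simpa [Real.dist_eq] using lt_of_le_of_lt htabs (by simpa [Real.dist_eq] using hh)
      calc ‖deriv f t‖ ≤ C * ‖t ^ n‖ := hCδ hdist
        _ ≤ |C| * |h| ^ n := by
            rw [norm_pow, Real.norm_eq_abs]
            exact mul_le_mul (le_abs_self C) (pow_le_pow_left₀ (abs_nonneg t) htabs n)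
              (by positivity) (abs_nonneg C)
    have := Convex.norm_image_sub_le_of_norm_hasDerivWithin_le
      (fun t _ => (hdf t).hasDerivAt.hasDerivWithinAt) hb (convex_uIcc 0 h)
      Set.left_mem_uIcc Set.right_mem_uIcc
    rw [hf0, sub_zero, sub_zero] at this
    calc ‖f h‖ ≤ |C| * |h| ^ n * ‖h‖ := this
      _ = |C| * ‖h ^ (n+1)‖ := by
        rw [norm_pow, Real.norm_eq_abs, pow_succ]; ring

theorem fourth_order_accuracy
    (y : ℝ → ℝ) (hy : ContDiff ℝ 6 y) (x : ℝ) :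
    (fun h : ℝ =>
        (y (x + h) - 2 * y x + y (x - h)) -
          h ^ 2 * ((1 / 12) * iteratedDeriv 2 y (x - h) + (5 / 6) * iteratedDeriv 2 y x +
            (1 / 12) * iteratedDeriv 2 y (x + h)))
      =O[nhds 0] (fun h : ℝ => h ^ 6) := by
  have hy6 : ContDiff ℝ (6:ℕ) y := by exact_mod_cast hy
  have hy2 : ContDiff ℝ (4:ℕ) (iteratedDeriv 2 y) := by
    have h6 : ContDiff ℝ ((5 : WithTop ℕ∞) + 1) y := by rw [show ((5 : WithTop ℕ∞) + 1) = 6 by norm_num]; exact hy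
    have h5 : ContDiff ℝ ((4 : WithTop ℕ∞) + 1) (deriv y) := by
      rw [show ((4 : WithTop ℕ∞) + 1) = 5 by norm_num]; exact (contDiff_succ_iff_deriv.mp h6).2.2
    have h4 : ContDiff ℝ (4 : WithTop ℕ∞) (deriv (deriv y)) :=
      (contDiff_succ_iff_deriv.mp h5).2.2
    have he : iteratedDeriv 2 y = deriv (deriv y) := by
      rw [iteratedDeriv_succ, iteratedDeriv_one]
    rw [he]
    exact_mod_cast h4
  have hii : ∀ m n : ℕ, iteratedDeriv m (iteratedDeriv n y) = iteratedDeriv (m + n) y := by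
    intro m n
    simp [iteratedDeriv_eq_iterate, ← Function.iterate_add_apply]
  -- shift facts
  have hA : ∀ (f : ℝ → ℝ) (k : ℕ), iteratedDeriv k (fun h : ℝ => f (x + h)) 0
      = iteratedDeriv k f x := by
    intro f k
    rw [iteratedDeriv_comp_const_add]
    norm_num
  have hB : ∀ (f : ℝ → ℝ) (k : ℕ), iteratedDeriv k (fun h : ℝ => f (x - h)) 0
      = (-1:ℝ)^k * iteratedDeriv k f x := by
    intro f k
    have H := iteratedDeriv_comp_neg k (fun z : ℝ => f (x + z)) 0
    rw [iteratedDeriv_comp_const_add] at H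
    have hrw : (fun h : ℝ => f (x - h)) = fun h => (fun z : ℝ => f (x + z)) (-h) := by
      funext h; rw [sub_eq_add_neg]
    rw [hrw, H]
    norm_num
  -- smoothness of shifts
  have hcA : ∀ n : ℕ, n ≤ 6 → ContDiff ℝ n (fun h : ℝ => y (x + h)) := fun n hn =>
    (hy6.of_le (by exact_mod_cast hn)).comp (contDiff_const.add contDiff_id)
  have hcB : ∀ n : ℕ, n ≤ 6 → ContDiff ℝ n (fun h : ℝ => y (x - h)) := fun n hn =>
    (hy6.of_le (by exact_mod_cast hn)).comp (contDiff_const.sub contDiff_id)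
  have hcA2 : ∀ n : ℕ, n ≤ 4 → ContDiff ℝ n (fun h : ℝ => iteratedDeriv 2 y (x + h)) :=
    fun n hn => (hy2.of_le (by exact_mod_cast hn)).comp (contDiff_const.add contDiff_id)
  have hcB2 : ∀ n : ℕ, n ≤ 4 → ContDiff ℝ n (fun h : ℝ => iteratedDeriv 2 y (x - h)) :=
    fun n hn => (hy2.of_le (by exact_mod_cast hn)).comp (contDiff_const.sub contDiff_id)
  -- abbreviations for the Taylor coefficients
  set c0 : ℝ := y x with hc0
  set c2 : ℝ := iteratedDeriv 2 y x with hc2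
  set c4 : ℝ := iteratedDeriv 4 y x with hc4
  -- the polynomial p and its iterated derivatives
  have hcp : ∀ n : ℕ, ContDiff ℝ n (fun h : ℝ => 2*c0 + c2*h^2 + c4/12*h^4) := fun n =>
    (contDiff_const.add (contDiff_const.mul (contDiff_id.pow 2))).add
      (contDiff_const.mul (contDiff_id.pow 4))
  have dp1 : deriv (fun h : ℝ => 2*c0 + c2*h^2 + c4/12*h^4) = fun h => 2*c2*h + c4/3*h^3 := by
    funext h
    rw [(show HasDerivAt (fun h : ℝ => 2*c0 + c2*h^2 + c4/12*h^4) _ h from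
      ((hasDerivAt_const h (2*c0)).add ((hasDerivAt_pow 2 h).const_mul c2)).add
      ((hasDerivAt_pow 4 h).const_mul (c4/12))).deriv]
    norm_num; ring
  have dp2 : deriv (fun h : ℝ => 2*c2*h + c4/3*h^3) = fun h => 2*c2 + c4*h^2 := by
    funext h
    rw [(show HasDerivAt (fun h : ℝ => 2*c2*h + c4/3*h^3) _ h from
      ((hasDerivAt_id' h)).const_mul (2*c2) |>.add ((hasDerivAt_pow 3 h).const_mul (c4/3))).deriv]
    norm_num; ring
  have dp3 : deriv (fun h : ℝ => 2*c2 + c4*h^2) = fun h => 2*c4*h := by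
    funext h
    rw [(show HasDerivAt (fun h : ℝ => 2*c2 + c4*h^2) _ h from
      (hasDerivAt_const h (2*c2)).add ((hasDerivAt_pow 2 h).const_mul c4)).deriv]
    norm_num; ring
  have dp4 : deriv (fun h : ℝ => 2*c4*h) = fun _ => 2*c4 := by
    funext h
    rw [((hasDerivAt_id' h).const_mul (2*c4)).deriv]
    norm_num
  have ip1 : iteratedDeriv 1 (fun h : ℝ => 2*c0 + c2*h^2 + c4/12*h^4)
      = fun h => 2*c2*h + c4/3*h^3 := by rw [iteratedDeriv_one, dp1]
  have ip2 : iteratedDeriv 2 (fun h : ℝ => 2*c0 + c2*h^2 + c4/12*h^4)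
      = fun h => 2*c2 + c4*h^2 := by rw [iteratedDeriv_succ, ip1, dp2]
  have ip3 : iteratedDeriv 3 (fun h : ℝ => 2*c0 + c2*h^2 + c4/12*h^4)
      = fun h => 2*c4*h := by rw [iteratedDeriv_succ, ip2, dp3]
  have ip4 : iteratedDeriv 4 (fun h : ℝ => 2*c0 + c2*h^2 + c4/12*h^4)
      = fun _ => 2*c4 := by rw [iteratedDeriv_succ, ip3, dp4]
  have ip5 : iteratedDeriv 5 (fun h : ℝ => 2*c0 + c2*h^2 + c4/12*h^4)
      = fun _ => 0 := by rw [iteratedDeriv_succ, ip4]; funext h; simp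
  -- the polynomial q and its iterated derivatives
  have hcq : ∀ n : ℕ, ContDiff ℝ n (fun h : ℝ => 1/6*c2 + c4/12*h^2) := fun n =>
    contDiff_const.add (contDiff_const.mul (contDiff_id.pow 2))
  have dq1 : deriv (fun h : ℝ => 1/6*c2 + c4/12*h^2) = fun h => c4/6*h := by
    funext h
    rw [(show HasDerivAt (fun h : ℝ => 1/6*c2 + c4/12*h^2) _ h from
      (hasDerivAt_const h (1/6*c2)).add ((hasDerivAt_pow 2 h).const_mul (c4/12))).deriv]
    norm_num; ring
  have dq2 : deriv (fun h : ℝ => c4/6*h) = fun _ => c4/6 := by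
    funext h
    rw [((hasDerivAt_id' h).const_mul (c4/6)).deriv]
    norm_num
  have iq1 : iteratedDeriv 1 (fun h : ℝ => 1/6*c2 + c4/12*h^2) = fun h => c4/6*h := by
    rw [iteratedDeriv_one, dq1]
  have iq2 : iteratedDeriv 2 (fun h : ℝ => 1/6*c2 + c4/12*h^2) = fun _ => c4/6 := by
    rw [iteratedDeriv_succ, iq1, dq2]
  have iq3 : iteratedDeriv 3 (fun h : ℝ => 1/6*c2 + c4/12*h^2) = fun _ => 0 := by
    rw [iteratedDeriv_succ, iq2]; funext h; simp
  -- first remainder is O(h^6)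
  have hg1 : (fun h : ℝ => (y (x+h) + y (x-h)) - (2*c0 + c2*h^2 + c4/12*h^4))
      =O[𝓝 (0:ℝ)] fun h : ℝ => h ^ 6 := by
    apply key_isBigO (n := 6)
    · exact ((hcA 6 le_rfl).add (hcB 6 le_rfl)).sub (hcp 6)
    · intro k hk
      rw [iteratedDeriv_sub' ((hcA k (by omega)).add (hcB k (by omega))) (hcp k),
        iteratedDeriv_add' (hcA k (by omega)) (hcB k (by omega)), hA y k, hB y k]
      interval_cases k
      · simp [← hc0]; ring
      · rw [ip1]; norm_num
      · rw [ip2, ← hc2]; norm_num; ring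
      · rw [ip3]; norm_num
      · rw [ip4, ← hc4]; norm_num; ring
      · rw [ip5]; norm_num
  -- second remainder is O(h^4)
  have hg2 : (fun h : ℝ => 1/12 * (iteratedDeriv 2 y (x+h) + iteratedDeriv 2 y (x-h))
      - (1/6*c2 + c4/12*h^2)) =O[𝓝 (0:ℝ)] fun h : ℝ => h ^ 4 := by
    apply key_isBigO (n := 4)
    · exact (contDiff_const.mul ((hcA2 4 le_rfl).add (hcB2 4 le_rfl))).sub (hcq 4)
    · intro k hk
      rw [iteratedDeriv_sub'
          (contDiff_const.mul ((hcA2 k (by omega)).add (hcB2 k (by omega)))) (hcq k),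
        iteratedDeriv_const_mul' _ ((hcA2 k (by omega)).add (hcB2 k (by omega))),
        iteratedDeriv_add' (hcA2 k (by omega)) (hcB2 k (by omega)),
        hA (iteratedDeriv 2 y) k, hB (iteratedDeriv 2 y) k, hii k 2]
      interval_cases k
      · norm_num [← hc2]; ring
      · norm_num [iq1]
      · rw [iq2, ← hc4]; norm_num; ring
      · rw [iq3]; norm_num
  -- combine
  have hmul : (fun h : ℝ => h^2 * (1/12 * (iteratedDeriv 2 y (x+h) + iteratedDeriv 2 y (x-h))
      - (1/6*c2 + c4/12*h^2))) =O[𝓝 (0:ℝ)] fun h : ℝ => h ^ 6 := by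
    have := (isBigO_refl (fun h : ℝ => h^2) (𝓝 (0:ℝ))).mul hg2
    have he : (fun h : ℝ => h^2 * h^4) = fun h : ℝ => h^6 := by
      funext h; ring
    rwa [he] at this
  have final := hg1.sub hmul
  have heq : (fun h : ℝ =>
        (y (x + h) - 2 * y x + y (x - h)) -
          h ^ 2 * ((1 / 12) * iteratedDeriv 2 y (x - h) + (5 / 6) * iteratedDeriv 2 y x +
            (1 / 12) * iteratedDeriv 2 y (x + h)))
      = fun h : ℝ => ((y (x+h) + y (x-h)) - (2*c0 + c2*h^2 + c4/12*h^4))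
        - h^2 * (1/12 * (iteratedDeriv 2 y (x+h) + iteratedDeriv 2 y (x-h))
          - (1/6*c2 + c4/12*h^2)) := by
    funext h
    rw [hc0, hc2]
    ring
  rw [heq]
  exact final
end
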